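/- Let a group K act on a group H by automorphisms, and form the semidirect product H ⋊ K. Then for every k ≥ 1, the k-th term of the lower central series of H ⋊ K equals the semidirect product Γ_k^K(H) ⋊ Γ_k(K), where Γ_k^K(H) is the relative lower central filtration of H inside H ⋊ K. In particular Γ_k(H ⋊ K) is generated by Γ_k^K(H) and Γ_k(K). -/

import Mathlib

/-- Relative lower central filtration of a (normal) subgroup `H` of `G`:
`Γ₁^G(H) = H` (index 0) and `Γ_{k+1}^G(H) = ⁅G, Γ_k^G(H)⁆`. -/
def relLCS {G : Type*} [Group G] (H : Subgroup G) : ℕ → Subgroup G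
  | 0 => H
  | k + 1 => ⁅(⊤ : Subgroup G), relLCS H k⁆

open scoped commutatorElement

section Aux

open Subgroup

variable {G : Type*} [Group G]

theorem lcs_succ_eq (G : Type*) [Group G] (n : ℕ) :
    Subgroup.lowerCentralSeries (⊤ : Subgroup G) (n + 1) = ⁅Subgroup.lowerCentralSeries (⊤ : Subgroup G) n, (⊤ : Subgroup G)⁆ := rfl

/-- Three subgroups lemma, `≤ N` version. -/
theorem commutator_commutator_le_of_rotate {H₁ H₂ H₃ N : Subgroup G} [N.Normal]
    (h1 : ⁅⁅H₂, H₃⁆, H₁⁆ ≤ N) (h2 : ⁅⁅H₃, H₁⁆, H₂⁆ ≤ N) : ⁅⁅H₁, H₂⁆, H₃⁆ ≤ N := by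
  let f := QuotientGroup.mk' N
  have key : ∀ {X : Subgroup G}, X ≤ N ↔ X.map f = ⊥ := by
    intro X
    rw [Subgroup.map_eq_bot_iff, QuotientGroup.ker_mk']
  rw [key] at h1 h2 ⊢
  rw [map_commutator, map_commutator] at h1 h2 ⊢
  exact Subgroup.commutator_commutator_eq_bot_of_rotate h1 h2

/-- If `⁅L, A⁆ ≤ N` and `⁅L, B⁆ ≤ N` with `N` normal, then `⁅L, A ⊔ B⁆ ≤ N`. -/
theorem commutator_sup_right_le {L A B N : Subgroup G} [N.Normal]
    (hA : ⁅L, A⁆ ≤ N) (hB : ⁅L, B⁆ ≤ N) : ⁅L, A ⊔ B⁆ ≤ N := by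
  rw [Subgroup.commutator_le] at hA hB ⊢
  intro g hg a ha
  rw [← Subgroup.closure_eq A, ← Subgroup.closure_eq B, ← Subgroup.closure_union] at ha
  induction ha using Subgroup.closure_induction with
  | mem x hx =>
    rcases hx with hx | hx
    · exact hA g hg x hx
    · exact hB g hg x hx
  | one => simpa using N.one_mem
  | mul x y _ _ hx hy =>
    have : ⁅g, x * y⁆ = ⁅g, x⁆ * (x * ⁅g, y⁆ * x⁻¹) := by group
    rw [this]
    exact N.mul_mem hx (‹N.Normal›.conj_mem _ hy x)
  | inv x _ hx =>
    have : ⁅g, x⁻¹⁆ = x⁻¹ * ⁅g, x⁆⁻¹ * x⁻¹⁻¹ := by group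
    rw [this]
    exact ‹N.Normal›.conj_mem _ (N.inv_mem hx) x⁻¹

theorem commutator_sup_left_le {L A B N : Subgroup G} [N.Normal]
    (hA : ⁅A, L⁆ ≤ N) (hB : ⁅B, L⁆ ≤ N) : ⁅A ⊔ B, L⁆ ≤ N := by
  rw [Subgroup.commutator_comm] at hA hB ⊢
  exact commutator_sup_right_le hA hB

theorem normal_sup {P Q : Subgroup G} [P.Normal]
    (h : ∀ q ∈ Q, ∀ g : G, g * q * g⁻¹ ∈ P ⊔ Q) : (P ⊔ Q).Normal := by
  constructor
  intro x hx g
  rw [← Subgroup.closure_eq P, ← Subgroup.closure_eq Q, ← Subgroup.closure_union] at hx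
  induction hx using Subgroup.closure_induction with
  | mem y hy =>
    rcases hy with hy | hy
    · exact Subgroup.mem_sup_left (‹P.Normal›.conj_mem y hy g)
    · exact h y hy g
  | one => simpa using Subgroup.one_mem _
  | mul y z _ _ hy hz =>
    have : g * (y * z) * g⁻¹ = (g * y * g⁻¹) * (g * z * g⁻¹) := by group
    rw [this]; exact Subgroup.mul_mem _ hy hz
  | inv y _ hy =>
    have : g * y⁻¹ * g⁻¹ = (g * y * g⁻¹)⁻¹ := by group
    rw [this]; exact Subgroup.inv_mem _ hy

theorem relLCS_normal {H : Subgroup G} [H.Normal] (k : ℕ) : (relLCS H k).Normal := by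
  induction k with
  | zero => assumption
  | succ n ih => exact @Subgroup.commutator_normal _ _ ⊤ (relLCS H n) inferInstance ih

end Aux

section SDP

open Subgroup SemidirectProduct

variable {H K : Type*} [Group H] [Group K] (φ : K →* MulAut H)

theorem range_inl_normal : ((inl : H →* H ⋊[φ] K).range).Normal := by
  rw [SemidirectProduct.range_inl_eq_ker_rightHom]
  infer_instance

/-- The key lemma: `⁅Γᵢ^K(H), Γⱼ(K)⁆ ≤ Γ_{i+j+1}^K(H)`. -/
theorem key_commutator_le (k : ℕ) : ∀ i : ℕ,
    ⁅relLCS (inl : H →* H ⋊[φ] K).range i,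
      (Subgroup.lowerCentralSeries (⊤ : Subgroup K) k).map (inr : K →* H ⋊[φ] K)⁆ ≤
      relLCS (inl : H →* H ⋊[φ] K).range (i + k + 1) := by
  haveI := range_inl_normal φ
  haveI : ∀ m, (relLCS (inl : H →* H ⋊[φ] K).range m).Normal := fun m => relLCS_normal m
  induction k with
  | zero =>
    intro i
    calc ⁅relLCS (inl : H →* H ⋊[φ] K).range i, (Subgroup.lowerCentralSeries (⊤ : Subgroup K) 0).map inr⁆
        ≤ ⁅relLCS (inl : H →* H ⋊[φ] K).range i, ⊤⁆ :=
          Subgroup.commutator_mono le_rfl le_top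
      _ = ⁅(⊤ : Subgroup (H ⋊[φ] K)), relLCS (inl : H →* H ⋊[φ] K).range i⁆ :=
          Subgroup.commutator_comm _ _
      _ = relLCS (inl : H →* H ⋊[φ] K).range (i + 0 + 1) := rfl
  | succ n ih =>
    intro i
    have hmap : (Subgroup.lowerCentralSeries (⊤ : Subgroup K) (n + 1)).map (inr : K →* H ⋊[φ] K) =
        ⁅(Subgroup.lowerCentralSeries (⊤ : Subgroup K) n).map (inr : K →* H ⋊[φ] K), (inr : K →* H ⋊[φ] K).range⁆ := by
      rw [lcs_succ_eq, Subgroup.map_commutator, ← MonoidHom.range_eq_map]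
    rw [hmap, Subgroup.commutator_comm]
    apply commutator_commutator_le_of_rotate
    · calc ⁅⁅(inr : K →* H ⋊[φ] K).range, relLCS (inl : H →* H ⋊[φ] K).range i⁆,
              (Subgroup.lowerCentralSeries (⊤ : Subgroup K) n).map inr⁆
          ≤ ⁅relLCS (inl : H →* H ⋊[φ] K).range (i + 1),
              (Subgroup.lowerCentralSeries (⊤ : Subgroup K) n).map inr⁆ := by
            apply Subgroup.commutator_mono _ le_rfl
            exact Subgroup.commutator_mono le_top le_rfl
        _ ≤ relLCS (inl : H →* H ⋊[φ] K).range (i + 1 + n + 1) := ih (i + 1)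
        _ = relLCS (inl : H →* H ⋊[φ] K).range (i + (n + 1) + 1) := by ring_nf
    · calc ⁅⁅relLCS (inl : H →* H ⋊[φ] K).range i, (Subgroup.lowerCentralSeries (⊤ : Subgroup K) n).map inr⁆,
              (inr : K →* H ⋊[φ] K).range⁆
          ≤ ⁅relLCS (inl : H →* H ⋊[φ] K).range (i + n + 1), ⊤⁆ :=
            Subgroup.commutator_mono (ih i) le_top
        _ = ⁅(⊤ : Subgroup (H ⋊[φ] K)), relLCS (inl : H →* H ⋊[φ] K).range (i + n + 1)⁆ :=
            Subgroup.commutator_comm _ _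
        _ = relLCS (inl : H →* H ⋊[φ] K).range (i + n + 1 + 1) := rfl
        _ = relLCS (inl : H →* H ⋊[φ] K).range (i + (n + 1) + 1) := by ring_nf

theorem range_inl_sup_range_inr :
    (inl : H →* H ⋊[φ] K).range ⊔ (inr : K →* H ⋊[φ] K).range = ⊤ := by
  rw [eq_top_iff]
  intro x _
  rw [← SemidirectProduct.inl_left_mul_inr_right x]
  exact Subgroup.mul_mem _ (Subgroup.mem_sup_left ⟨x.left, rfl⟩)
    (Subgroup.mem_sup_right ⟨x.right, rfl⟩)

end SDP

/-- `Γ_k(H ⋊ K) = Γ_k^K(H) ⋊ Γ_k(K)`: the `k`-th term of the lower central series of the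
semidirect product is generated by the relative lower central filtration of `H` and the
lower central series of `K` (0-based indexing). -/
theorem lowerCentralSeries_semidirectProduct {H K : Type*} [Group H] [Group K]
    (φ : K →* MulAut H) (k : ℕ) :
    Subgroup.lowerCentralSeries (⊤ : Subgroup (H ⋊[φ] K)) k =
      relLCS (SemidirectProduct.inl : H →* H ⋊[φ] K).range k ⊔
        (Subgroup.lowerCentralSeries (⊤ : Subgroup K) k).map (SemidirectProduct.inr : K →* H ⋊[φ] K) := by
  open Subgroup SemidirectProduct in
  haveI := range_inl_normal φ
  haveI : ∀ m, (relLCS (inl : H →* H ⋊[φ] K).range m).Normal := fun m => relLCS_normal m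
  induction k with
  | zero =>
    show (⊤ : Subgroup (H ⋊[φ] K)) =
      relLCS (inl : H →* H ⋊[φ] K).range 0 ⊔ Subgroup.map (inr : K →* H ⋊[φ] K) ⊤
    rw [← MonoidHom.range_eq_map]
    exact (range_inl_sup_range_inr φ).symm
  | succ n ih =>
    have hBsucc : (Subgroup.lowerCentralSeries (⊤ : Subgroup K) (n + 1)).map (inr : K →* H ⋊[φ] K) =
        ⁅(Subgroup.lowerCentralSeries (⊤ : Subgroup K) n).map (inr : K →* H ⋊[φ] K), (inr : K →* H ⋊[φ] K).range⁆ := by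
      rw [lcs_succ_eq, Subgroup.map_commutator, ← MonoidHom.range_eq_map]
    have hkey : ⁅relLCS (inl : H →* H ⋊[φ] K).range 0,
        (Subgroup.lowerCentralSeries (⊤ : Subgroup K) n).map (inr : K →* H ⋊[φ] K)⁆ ≤
        relLCS (inl : H →* H ⋊[φ] K).range (n + 1) := by
      simpa using key_commutator_le φ n 0
    haveI hN : (relLCS (inl : H →* H ⋊[φ] K).range (n + 1) ⊔
        (Subgroup.lowerCentralSeries (⊤ : Subgroup K) (n + 1)).map (inr : K →* H ⋊[φ] K)).Normal := by
      apply normal_sup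
      intro q hq g
      obtain ⟨z, hz, rfl⟩ := hq
      rw [← SemidirectProduct.inl_left_mul_inr_right g]
      have hz' : g.right * z * g.right⁻¹ ∈ Subgroup.lowerCentralSeries (⊤ : Subgroup K) (n + 1) :=
        (Subgroup.lowerCentralSeries_normal ⊤ (n + 1)).conj_mem z hz g.right
      have key : (inl g.left * inr g.right : H ⋊[φ] K) * inr z * (inl g.left * inr g.right)⁻¹
          = ⁅(inl g.left : H ⋊[φ] K), inr (g.right * z * g.right⁻¹)⁆
            * inr (g.right * z * g.right⁻¹) := by
        simp only [map_mul, map_inv, commutatorElement_def]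
        group
      rw [key]
      refine Subgroup.mul_mem _ (Subgroup.mem_sup_left (hkey ?_))
        (Subgroup.mem_sup_right ⟨_, hz', rfl⟩)
      exact Subgroup.commutator_mem_commutator ⟨g.left, rfl⟩
        ⟨_, Subgroup.lowerCentralSeries_antitone ⊤ (Nat.le_succ n) hz', rfl⟩
    have lhs_eq : Subgroup.lowerCentralSeries (⊤ : Subgroup (H ⋊[φ] K)) (n + 1)
        = ⁅(⊤ : Subgroup (H ⋊[φ] K)), relLCS (inl : H →* H ⋊[φ] K).range n ⊔
            (Subgroup.lowerCentralSeries (⊤ : Subgroup K) n).map (inr : K →* H ⋊[φ] K)⁆ := by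
      rw [lcs_succ_eq, Subgroup.commutator_comm, ih]
    rw [lhs_eq]
    apply le_antisymm
    · apply commutator_sup_right_le
      · exact le_sup_left
      · rw [← range_inl_sup_range_inr φ]
        apply commutator_sup_left_le
        · exact hkey.trans le_sup_left
        · rw [Subgroup.commutator_comm, ← hBsucc]
          exact le_sup_right
    · apply sup_le
      · exact Subgroup.commutator_mono le_rfl le_sup_left
      · rw [hBsucc, Subgroup.commutator_comm]
        exact Subgroup.commutator_mono le_top le_sup_right
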